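/- arXiv:math/0106165 — 3 statements merged into one kernel-verified Lean document; each statement's English description precedes it below -/
import Mathlib

section
/- Let X be a finite rack and a ∈ X. As y runs over X, a^y runs over the orbit of a under the operator group, taking each value in the orbit the same number of times, provided X has homogeneous orbits; consequently for any function g : X → G to an abelian group and any w in the free group on X acting on X, ∑_{y∈X} g(a^y) = ∑_{y∈X} g(a^{y·w}). -/
/-- A rack: a set with a binary operation `act a b = a^b` such that each
`fun a => a^b` is a bijection and the rack identity `(a^b)^c = (a^c)^(b^c)` holds. -/
structure RackStr (X : Type) where
  act : X → X → X
  bij : ∀ b, Function.Bijective fun a => act a b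
  distrib : ∀ a b c, act (act a b) c = act (act a c) (act b c)

namespace RackStr
variable {X : Type}

/-- Two elements are in the same orbit iff they are related by the equivalence
relation generated by `a ↦ a^c`. -/
def orbRel (R : RackStr X) : X → X → Prop :=
  Relation.EqvGen fun a b => ∃ c, R.act a c = b

/-- `N a b` is the number of `c` with `a^c = b`. -/
noncomputable def N (R : RackStr X) (a b : X) : ℕ :=
  Nat.card {c : X // R.act a c = b}

/-- A rack has homogeneous orbits if `N a b` depends only on the common orbit
of `a` and `b`. -/
def Homog (R : RackStr X) : Prop :=
  ∀ a b a' b', R.orbRel a b → R.orbRel b a' → R.orbRel a' b' → R.N a b = R.N a' b'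

/-- The permutation `f_b : a ↦ a^b`. -/
noncomputable def perm (R : RackStr X) (b : X) : Equiv.Perm X :=
  Equiv.ofBijective (fun a => R.act a b) (R.bij b)

/-- The action of the free group on `X` extending `b ↦ f_b`. -/
noncomputable def wact (R : RackStr X) : FreeGroup X →* Equiv.Perm X :=
  FreeGroup.lift R.perm

end RackStr


section Aux
open scoped Classical
variable {X : Type} (R : RackStr X)

lemma orbRel_refl (a : X) : R.orbRel a a := Relation.EqvGen.refl a
lemma orbRel_symm {a b : X} (h : R.orbRel a b) : R.orbRel b a := Relation.EqvGen.symm _ _ h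
lemma orbRel_trans {a b c : X} (h : R.orbRel a b) (h' : R.orbRel b c) : R.orbRel a c :=
  Relation.EqvGen.trans _ _ _ h h'
lemma orbRel_act (a c : X) : R.orbRel a (R.act a c) := Relation.EqvGen.rel _ _ ⟨c, rfl⟩

lemma N_eq [Fintype X] (a b : X) :
    R.N a b = (Finset.univ.filter fun c => R.act a c = b).card := by
  rw [RackStr.N, Nat.card_eq_fintype_card, Fintype.card_subtype]

lemma sum_N [Fintype X] (a : X) : ∑ b : X, R.N a b = Fintype.card X := by
  simp_rw [N_eq]
  rw [← Finset.card_univ,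
    Finset.card_eq_sum_card_fiberwise (f := fun c => R.act a c) (t := Finset.univ)
      (fun x _ => Finset.mem_univ _)]

lemma N_zero_of_not_rel {a b : X} (h : ¬ R.orbRel a b) : R.N a b = 0 := by
  rw [RackStr.N, Nat.card_eq_zero]
  left
  refine ⟨fun ⟨c, hc⟩ => h (hc ▸ orbRel_act R a c)⟩

end Aux

section Aux2
open scoped Classical
variable {X : Type} (R : RackStr X)

lemma N_const (hh : R.Homog) {a b c : X} (hb : R.orbRel a b) (hc : R.orbRel a c) :
    R.N a b = R.N a c :=
  hh a b a c hb (orbRel_symm R hb) hc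

lemma exists_act [Fintype X] (hh : R.Homog) {a b : X} (h : R.orbRel a b) :
    ∃ c, R.act a c = b := by
  by_contra hno
  have hNb : R.N a b = 0 := by
    rw [RackStr.N, Nat.card_eq_zero]; left
    exact ⟨fun ⟨c, hc⟩ => hno ⟨c, hc⟩⟩
  have hall : ∀ d : X, R.N a d = 0 := by
    intro d
    by_cases hd : R.orbRel a d
    · rw [N_const R hh hd h]; exact hNb
    · exact N_zero_of_not_rel R hd
  have := sum_N R a
  rw [Finset.sum_congr rfl (fun d _ => hall d), Finset.sum_const_zero] at this
  have hpos : 0 < Fintype.card X := Fintype.card_pos_iff.mpr ⟨a⟩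
  omega

lemma orbRel_wact (w : FreeGroup X) : ∀ b : X, R.orbRel b (R.wact w b) := by
  induction w using FreeGroup.induction_on with
  | C1 => intro b; simpa using orbRel_refl R b
  | of x =>
      intro b
      show R.orbRel b (R.wact (FreeGroup.of x) b)
      rw [show R.wact (FreeGroup.of x) = R.perm x from FreeGroup.lift_apply_of]
      exact orbRel_act R b x
  | inv_of x _ =>
      intro b
      show R.orbRel b (R.wact (FreeGroup.of x)⁻¹ b)
      have h2 : R.wact (FreeGroup.of x)⁻¹ = (R.perm x)⁻¹ := by
        rw [map_inv, show R.wact (FreeGroup.of x) = R.perm x from FreeGroup.lift_apply_of]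
      rw [h2]
      have h3 : R.act ((R.perm x)⁻¹ b) x = b := (R.perm x).apply_symm_apply b
      have h4 := orbRel_act R ((R.perm x)⁻¹ b) x
      rw [h3] at h4
      exact orbRel_symm R h4
  | mul u v hu hv =>
      intro b
      rw [map_mul, Equiv.Perm.mul_apply]
      exact orbRel_trans R (hv b) (hu _)

end Aux2

section Aux3
open scoped Classical
open Finset
variable {X : Type} [Fintype X] (R : RackStr X)

lemma image_act (hh : R.Homog) (a : X) :
    (Finset.univ.image fun c => R.act a c) = Finset.univ.filter (R.orbRel a) := by
  ext b
  simp only [Finset.mem_image, Finset.mem_univ, true_and, Finset.mem_filter]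
  exact ⟨fun ⟨c, hc⟩ => hc ▸ orbRel_act R a c, fun h => exists_act R hh h⟩

lemma key_sum (hh : R.Homog) (a : X) {G : Type} [AddCommGroup G] (g : X → G) :
    ∑ y : X, g (R.act a y) = ∑ b ∈ Finset.univ.filter (R.orbRel a), R.N a a • g b := by
  rw [Finset.sum_comp g (fun c => R.act a c), image_act R hh a]
  refine Finset.sum_congr rfl fun b hb => ?_
  rw [Finset.mem_filter] at hb
  congr 1
  rw [← N_eq]
  exact N_const R hh hb.2 (orbRel_refl R a)

lemma image_wact (w : FreeGroup X) (a : X) :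
    (Finset.univ.filter (R.orbRel a)).image (R.wact w) = Finset.univ.filter (R.orbRel a) := by
  apply Finset.eq_of_subset_of_card_le
  · intro b hb
    rw [Finset.mem_image] at hb
    obtain ⟨c, hc, rfl⟩ := hb
    rw [Finset.mem_filter] at hc ⊢
    exact ⟨Finset.mem_univ _, orbRel_trans R hc.2 (orbRel_wact R w c)⟩
  · rw [Finset.card_image_of_injective _ (R.wact w).injective]

theorem stmt4' (hh : R.Homog) {G : Type} [AddCommGroup G] (g : X → G) (a : X) (w : FreeGroup X) :
    (∀ b, R.orbRel a b ↔ ∃ y, R.act a y = b) ∧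
    (∀ b c, R.orbRel a b → R.orbRel a c → R.N a b = R.N a c) ∧
    ∑ y : X, g (R.act a y) = ∑ y : X, g (R.wact w (R.act a y)) := by
  refine ⟨fun b => ⟨fun h => exists_act R hh h, fun ⟨y, hy⟩ => hy ▸ orbRel_act R a y⟩,
    fun b c hb hc => N_const R hh hb hc, ?_⟩
  rw [key_sum R hh a g, key_sum R hh a (fun x => g (R.wact w x))]
  have h1 : ∑ b ∈ Finset.univ.filter (R.orbRel a), R.N a a • g (R.wact w b)
      = ∑ b ∈ (Finset.univ.filter (R.orbRel a)).image (R.wact w), R.N a a • g b :=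
    (Finset.sum_image (f := fun b => R.N a a • g b) (g := ⇑(R.wact w))
      (fun x _ y _ h => (R.wact w).injective h)).symm
  rw [h1, image_wact R w a]

end Aux3


theorem stmt4 {X : Type} [Fintype X] (R : RackStr X) (hh : R.Homog)
    {G : Type} [AddCommGroup G] (g : X → G) (a : X) (w : FreeGroup X) :
    (∀ b, R.orbRel a b ↔ ∃ y, R.act a y = b) ∧
    (∀ b c, R.orbRel a b → R.orbRel a c → R.N a b = R.N a c) ∧
    ∑ y : X, g (R.act a y) = ∑ y : X, g (R.wact w (R.act a y)) :=
  stmt4' R hh g a w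
end

section
/- Let X be a finite rack with homogeneous orbits, G an abelian group, g : X → G a function, a ∈ X, and w ∈ F(X). Then ∑_{y∈X} g(a^y) = ∑_{y∈X} g(a^{w·y}), i.e. the sum is unchanged if a is first acted on by w. -/
section Aux
namespace RackStr
variable {X : Type}

lemma orbRel_act (R : RackStr X) (a c : X) : R.orbRel a (R.act a c) :=
  Relation.EqvGen.rel _ _ ⟨c, rfl⟩

lemma orbRel_refl (R : RackStr X) (a : X) : R.orbRel a a := Relation.EqvGen.refl a

lemma orbRel_symm (R : RackStr X) {a b : X} (h : R.orbRel a b) : R.orbRel b a :=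
  Relation.EqvGen.symm _ _ h

lemma orbRel_trans (R : RackStr X) {a b c : X} (h : R.orbRel a b) (h' : R.orbRel b c) :
    R.orbRel a c := Relation.EqvGen.trans _ _ _ h h'

lemma N_eq_zero (R : RackStr X) {a b : X} (h : ¬ R.orbRel a b) : R.N a b = 0 := by
  rw [N, Nat.card_eq_zero]
  left
  refine ⟨fun c => h ?_⟩
  exact c.2 ▸ R.orbRel_act a c.1

lemma N_eq_of_orb (R : RackStr X) (hh : R.Homog) {a a' : X} (h : R.orbRel a a') (b : X) :
    R.N a b = R.N a' b := by
  by_cases hb : R.orbRel a b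
  · exact hh a b a' b hb (R.orbRel_trans (R.orbRel_symm hb) h)
      (R.orbRel_trans (R.orbRel_symm h) hb)
  · rw [R.N_eq_zero hb, R.N_eq_zero (fun h' => hb (R.orbRel_trans h h'))]

lemma sum_act [Fintype X] (R : RackStr X) {G : Type} [AddCommGroup G] (g : X → G) (a : X) :
    ∑ y : X, g (R.act a y) = ∑ b : X, R.N a b • g b := by
  classical
  rw [← Finset.sum_fiberwise Finset.univ (fun y => R.act a y) (fun y => g (R.act a y))]
  refine Finset.sum_congr rfl fun b _ => ?_
  have h : ∑ y ∈ Finset.univ.filter (fun y => R.act a y = b), g (R.act a y)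
      = ∑ _y ∈ Finset.univ.filter (fun y => R.act a y = b), g b :=
    Finset.sum_congr rfl fun y hy => by rw [(Finset.mem_filter.mp hy).2]
  rw [h, Finset.sum_const, N, Nat.card_eq_fintype_card, Fintype.card_subtype]

lemma wact_of (R : RackStr X) (x c : X) : R.wact (FreeGroup.of x) c = R.act c x := by
  rw [wact, FreeGroup.lift_apply_of]; rfl

lemma orbRel_wact [Fintype X] (R : RackStr X) (a : X) (w : FreeGroup X) :
    R.orbRel a (R.wact w a) := by
  induction w using FreeGroup.induction_on generalizing a with
  | C1 => simpa using R.orbRel_refl a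
  | of x =>
      show R.orbRel a (R.wact (FreeGroup.of x) a)
      rw [R.wact_of]; exact R.orbRel_act a x
  | inv_of x _ =>
      show R.orbRel a (R.wact (FreeGroup.of x)⁻¹ a)
      have h1 : R.wact (FreeGroup.of x) (R.wact (FreeGroup.of x)⁻¹ a) = a := by
        rw [← Equiv.Perm.mul_apply, ← map_mul]
        simp
      rw [R.wact_of] at h1
      refine R.orbRel_symm ?_
      have := R.orbRel_act (R.wact (FreeGroup.of x)⁻¹ a) x
      rwa [h1] at this
  | mul v u hv hu =>
      rw [map_mul, Equiv.Perm.mul_apply]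
      exact R.orbRel_trans (hu a) (hv (R.wact u a))

end RackStr
end Aux

theorem stmt5 {X : Type} [Fintype X] (R : RackStr X) (hh : R.Homog)
    {G : Type} [AddCommGroup G] (g : X → G) (a : X) (w : FreeGroup X) :
    ∑ y : X, g (R.act a y) = ∑ y : X, g (R.act (R.wact w a) y) := by
  rw [R.sum_act g a, R.sum_act g (R.wact w a)]
  exact Finset.sum_congr rfl fun b _ => by
    rw [R.N_eq_of_orb hh (R.orbRel_wact a w) b]
end

section
/- If 4 divides n, then the dihedral rack R_{2n} (ℤ/2n with a^b = 2b − a) is isomorphic as a rack to the Alexander rack Λ_{2n}/(t − (n−1)) (ℤ/2n with a^b = (n−1)a + (2−n)b), via the map f(a) = a + ε(a) where ε(a) = 0 if a ≡ 0,1 (mod 4) and ε(a) = n if a ≡ 2,3 (mod 4). -/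
/-- `ε(a) = 0` if `a ≡ 0, 1 (mod 4)` and `ε(a) = n` if `a ≡ 2, 3 (mod 4)`. -/
def eps (n : ℕ) (a : ZMod (2 * n)) : ZMod (2 * n) :=
  if a.val % 4 = 0 ∨ a.val % 4 = 1 then 0 else (n : ZMod (2 * n))

/-- `f(a) = a + ε(a)`. -/
def fdih (n : ℕ) (a : ZMod (2 * n)) : ZMod (2 * n) := a + eps n a

lemma aux4 {R : Type*} [AddCommGroup R] (N : R) (hN : N + N = 0) (y z : ZMod 4) :
    (if 2 * z - y = 0 ∨ 2 * z - y = 1 then (0 : R) else N) =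
      (if (y - z).val % 2 = 0 then 0 else N) + (if y = 0 ∨ y = 1 then 0 else N) := by
  fin_cases y <;> fin_cases z <;>
    simp_all (config := { decide := true }) <;>
    first
      | rfl
      | exact hN.symm
      | (intro h1; exact absurd rfl h1)
      | (intro _ h2; exact absurd rfl h2)
      | (rintro (h1 | h1) <;> exact absurd (congrArg Fin.val h1) (by decide))

/-- If `4 ∣ n`, then `f` is a rack isomorphism from the dihedral rack `R_{2n}`
(`ℤ/2n` with `a^b = 2b - a`) to the Alexander rack `Λ_{2n}/(t-(n-1))`
(`ℤ/2n` with `a^b = (n-1)a + (2-n)b`). -/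
theorem stmt19 (n : ℕ) (h : 4 ∣ n) :
    Function.Bijective (fdih n) ∧
    ∀ a b : ZMod (2 * n),
      fdih n (2 * b - a) =
        ((n : ZMod (2 * n)) - 1) * fdih n a + (2 - (n : ZMod (2 * n))) * fdih n b := by
  rcases Nat.eq_zero_or_pos n with rfl | hn
  · have hf : fdih 0 = id := by
      funext a; simp [fdih, eps]
    constructor
    · rw [hf]; exact Function.bijective_id
    · intro a b; rw [hf]; simp; ring
  · haveI : NeZero (2 * n) := ⟨by omega⟩
    have h2n : (4 : ℕ) ∣ 2 * n := h.mul_left 2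
    set N := (n : ZMod (2 * n)) with hNdef
    let g : ZMod (2 * n) →+* ZMod 4 := ZMod.castHom h2n (ZMod 4)
    have hval : ∀ x : ZMod (2 * n), x.val % 4 = (g x).val := by
      intro x
      show x.val % 4 = (ZMod.castHom h2n (ZMod 4) x).val
      rw [ZMod.castHom_apply, ← ZMod.natCast_val, ZMod.val_natCast]
    have hiff : ∀ y : ZMod 4, (y.val = 0 ∨ y.val = 1) ↔ (y = 0 ∨ y = 1) := by decide
    have heps : ∀ x, eps n x = if g x = 0 ∨ g x = 1 then 0 else N := by
      intro x
      unfold eps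
      rw [hval]
      exact if_congr (hiff (g x)) rfl rfl
    have hNN : N + N = 0 := by
      rw [hNdef, ← Nat.cast_add, show n + n = 2 * n by ring, ZMod.natCast_self]
    have hgN : g N = 0 := by
      rw [hNdef, map_natCast, ZMod.natCast_eq_zero_iff]
      exact h
    obtain ⟨k, hk⟩ : 2 ∣ n := dvd_trans ⟨2, rfl⟩ h
    have hNsq : N * N = 0 := by
      rw [hNdef, ← Nat.cast_mul]
      have : n * n = 2 * n * k := by rw [hk]; ring
      rw [this, Nat.cast_mul, ZMod.natCast_self, zero_mul]
    have hnmul : ∀ x : ZMod (2 * n), N * x = if (g x).val % 2 = 0 then 0 else N := by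
      intro x
      have hx : ((x.val : ℕ) : ZMod (2 * n)) = x := by
        rw [ZMod.natCast_val, ZMod.cast_id]
      have hmod : (g x).val % 2 = x.val % 2 := by
        rw [← hval]; omega
      have harith : n * x.val = 2 * n * (x.val / 2) + n * (x.val % 2) := by
        conv_lhs => rw [← Nat.div_add_mod x.val 2]
        ring
      have : N * x = ((n * (x.val % 2) : ℕ) : ZMod (2 * n)) := by
        conv_lhs => rw [← hx]
        rw [hNdef, ← Nat.cast_mul, harith, Nat.cast_add, Nat.cast_mul,
          ZMod.natCast_self, zero_mul, zero_add]
      rw [this, hmod]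
      rcases Nat.mod_two_eq_zero_or_one x.val with h2 | h2 <;> rw [h2] <;> simp [hNdef]
    have heps2 : ∀ x, eps n x + eps n x = 0 := by
      intro x; rw [heps]; split <;> simp [hNN]
    have hepsN : ∀ x, N * eps n x = 0 := by
      intro x; rw [heps]; split <;> simp [hNsq]
    have key : ∀ a b : ZMod (2 * n),
        eps n (2 * b - a) = N * (a - b) + eps n a := by
      intro a b
      rw [heps, heps, hnmul]
      have hg : g (2 * b - a) = 2 * (g b) - g a := by
        rw [map_sub, map_mul, map_ofNat]
      have hg' : g (a - b) = g a - g b := map_sub g a b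
      rw [hg, hg']
      exact aux4 N hNN (g a) (g b)
    constructor
    · have hfix : ∀ x, eps n (fdih n x) = eps n x := by
        intro x
        rw [heps, heps]
        have : g (fdih n x) = g x := by
          unfold fdih
          rw [map_add]
          have : g (eps n x) = 0 := by rw [heps]; split <;> simp [hgN]
          rw [this, add_zero]
        rw [this]
      have hinv : Function.Involutive (fdih n) := by
        intro x
        show fdih n x + eps n (fdih n x) = x
        rw [hfix]
        show x + eps n x + eps n x = x
        rw [add_assoc, heps2, add_zero]
      exact hinv.bijective
    · intro a b
      have e1 := hepsN a
      have e2 := hepsN b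
      have e3 := heps2 a
      have e4 := heps2 b
      have k1 := key a b
      unfold fdih
      linear_combination k1 + e3 - e4 - e1 + e2
end
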